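/- Let S and A be finite nonempty sets, let π_1 and π_2 be two policies executed under the SAME dynamics kernel p from a common initial state distribution ρ0, let r be a reward bounded in absolute value by r_max ≥ 0, and γ ∈ (0,1). If max_s TV(π_1(·|s), π_2(·|s)) ≤ ε_π, then the respective discounted returns satisfy |η_1 − η_2| ≤ 2·r_max·γ·ε_π/(1−γ)² + 2·r_max·ε_π/(1−γ). -/

import Mathlib

open scoped BigOperators

/-- Total variation distance between two probability mass functions on a finite type. -/
noncomputable def tv {X : Type*} [Fintype X] (q1 q2 : PMF X) : ℝ :=
  (1 / 2) * ∑ x, |(q1 x).toReal - (q2 x).toReal|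

/-- Total variation distance between two real-valued distributions on a finite type. -/
noncomputable def tvFun {X : Type*} [Fintype X] (d1 d2 : X → ℝ) : ℝ :=
  (1 / 2) * ∑ x, |d1 x - d2 x|

/-- Time-`t` state-action marginal of a (possibly time-varying) policy/dynamics pair,
started from initial state distribution `ρ0`:  `d⁰(s,a) = ρ0(s)·π₀(a|s)` and
`d^{t+1}(s,a) = Σ_{s',a'} d^t(s',a')·p_t(s|s',a')·π_{t+1}(a|s)`. -/
noncomputable def marginal {S A : Type*} [Fintype S] [Fintype A]
    (ρ0 : PMF S) (πseq : ℕ → S → PMF A) (pseq : ℕ → S × A → PMF S) :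
    ℕ → S × A → ℝ
  | 0 => fun sa => (ρ0 sa.1).toReal * ((πseq 0 sa.1) sa.2).toReal
  | t + 1 => fun sa =>
      ∑ s' : S, ∑ a' : A,
        marginal ρ0 πseq pseq t (s', a') * ((pseq t (s', a')) sa.1).toReal *
          ((πseq (t + 1) sa.1) sa.2).toReal

/-- Discounted return `η = Σ_t γ^t Σ_{s,a} d^t(s,a)·r(s,a)`. -/
noncomputable def ret {S A : Type*} [Fintype S] [Fintype A]
    (γ : ℝ) (r : S × A → ℝ) (d : ℕ → S × A → ℝ) : ℝ :=
  ∑' t : ℕ, γ ^ t * ∑ sa : S × A, d t sa * r sa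

lemma pmf_sum_one {X : Type*} [Fintype X] (q : PMF X) : ∑ x, (q x).toReal = 1 := by
  have h : ∑' x, q x = 1 := q.tsum_coe
  rw [tsum_fintype] at h
  have hne : ∀ x ∈ Finset.univ, q x ≠ (⊤ : ENNReal) := fun x _ => (q.apply_lt_top x).ne
  rw [← ENNReal.toReal_sum hne, h, ENNReal.toReal_one]

lemma marginal_nonneg {S A : Type*} [Fintype S] [Fintype A]
    (ρ0 : PMF S) (πseq : ℕ → S → PMF A) (pseq : ℕ → S × A → PMF S) :
    ∀ t sa, 0 ≤ marginal ρ0 πseq pseq t sa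
  | 0, sa => mul_nonneg ENNReal.toReal_nonneg ENNReal.toReal_nonneg
  | t + 1, sa => by
      simp only [marginal]
      refine Finset.sum_nonneg fun s' _ => Finset.sum_nonneg fun a' _ => ?_
      exact mul_nonneg (mul_nonneg (marginal_nonneg ρ0 πseq pseq t _)
        ENNReal.toReal_nonneg) ENNReal.toReal_nonneg

/-- ∑ over pairs of q(s)·π(a|s) = 1 -/
lemma sum_p_pi {S A : Type*} [Fintype S] [Fintype A] (q : PMF S) (π : S → PMF A) :
    ∑ sa : S × A, (q sa.1).toReal * ((π sa.1) sa.2).toReal = 1 := by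
  rw [Fintype.sum_prod_type]
  have : ∀ s : S, ∑ a : A, (q s).toReal * ((π s) a).toReal = (q s).toReal := fun s => by
    rw [← Finset.mul_sum, pmf_sum_one, mul_one]
  simp_rw [this]
  exact pmf_sum_one q

lemma marginal_sum_one {S A : Type*} [Fintype S] [Fintype A]
    (ρ0 : PMF S) (πseq : ℕ → S → PMF A) (pseq : ℕ → S × A → PMF S) :
    ∀ t, ∑ sa : S × A, marginal ρ0 πseq pseq t sa = 1
  | 0 => sum_p_pi ρ0 (πseq 0)
  | t + 1 => by
      simp only [marginal]
      have h1 : ∀ sa : S × A,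
          (∑ s' : S, ∑ a' : A,
            marginal ρ0 πseq pseq t (s', a') * ((pseq t (s', a')) sa.1).toReal *
              ((πseq (t + 1) sa.1) sa.2).toReal)
          = ∑ sa' : S × A,
            marginal ρ0 πseq pseq t sa' * ((pseq t sa') sa.1).toReal *
              ((πseq (t + 1) sa.1) sa.2).toReal := by
        intro sa
        rw [Fintype.sum_prod_type]
      simp_rw [h1]
      rw [Finset.sum_comm]
      have h2 : ∀ sa' : S × A,
          (∑ sa : S × A, marginal ρ0 πseq pseq t sa' * ((pseq t sa') sa.1).toReal *
              ((πseq (t + 1) sa.1) sa.2).toReal)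
          = marginal ρ0 πseq pseq t sa' := by
        intro sa'
        have : ∀ sa : S × A,
            marginal ρ0 πseq pseq t sa' * ((pseq t sa') sa.1).toReal *
              ((πseq (t + 1) sa.1) sa.2).toReal
            = marginal ρ0 πseq pseq t sa' *
              (((pseq t sa') sa.1).toReal * ((πseq (t + 1) sa.1) sa.2).toReal) := by
          intro sa; ring
        simp_rw [this, ← Finset.mul_sum, sum_p_pi (pseq t sa') (πseq (t+1)), mul_one]
      simp_rw [h2]
      exact marginal_sum_one ρ0 πseq pseq t

lemma sum_abs_pi_diff {A : Type*} [Fintype A] (π1 π2 : PMF A) :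
    ∑ a, |(π1 a).toReal - (π2 a).toReal| = 2 * tv π1 π2 := by
  rw [tv]; ring

/-- ∑ over pairs of q(s)·|π1(a|s)-π2(a|s)| ≤ 2ε -/
lemma sum_p_pidiff {S A : Type*} [Fintype S] [Fintype A] (q : PMF S) (π1 π2 : S → PMF A)
    (ε : ℝ) (hε : ∀ s, tv (π1 s) (π2 s) ≤ ε) :
    ∑ sa : S × A, (q sa.1).toReal * |((π1 sa.1) sa.2).toReal - ((π2 sa.1) sa.2).toReal|
      ≤ 2 * ε := by
  rw [Fintype.sum_prod_type]
  calc ∑ s : S, ∑ a : A, (q s).toReal * |((π1 s) a).toReal - ((π2 s) a).toReal|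
      = ∑ s : S, (q s).toReal * (2 * tv (π1 s) (π2 s)) := by
        refine Finset.sum_congr rfl fun s _ => ?_
        rw [← Finset.mul_sum, sum_abs_pi_diff]
    _ ≤ ∑ s : S, (q s).toReal * (2 * ε) := by
        refine Finset.sum_le_sum fun s _ => ?_
        exact mul_le_mul_of_nonneg_left (by linarith [hε s]) ENNReal.toReal_nonneg
    _ = 2 * ε := by rw [← Finset.sum_mul, pmf_sum_one, one_mul]

lemma sum_abs_marginal_diff {S A : Type*} [Fintype S] [Fintype A]
    (p : S × A → PMF S) (π1 π2 : S → PMF A) (ρ0 : PMF S)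
    (ε : ℝ) (hε : ∀ s, tv (π1 s) (π2 s) ≤ ε) :
    ∀ t, ∑ sa : S × A,
        |marginal ρ0 (fun _ => π1) (fun _ => p) t sa -
          marginal ρ0 (fun _ => π2) (fun _ => p) t sa| ≤ 2 * ε * (t + 1)
  | 0 => by
      simp only [marginal]
      have h : ∀ sa : S × A,
          |(ρ0 sa.1).toReal * ((π1 sa.1) sa.2).toReal -
            (ρ0 sa.1).toReal * ((π2 sa.1) sa.2).toReal|
          = (ρ0 sa.1).toReal * |((π1 sa.1) sa.2).toReal - ((π2 sa.1) sa.2).toReal| := by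
        intro sa
        rw [← mul_sub, abs_mul, abs_of_nonneg ENNReal.toReal_nonneg]
      simp_rw [h]
      calc _ ≤ 2 * ε := sum_p_pidiff ρ0 π1 π2 ε hε
        _ = 2 * ε * ((0:ℕ) + 1) := by norm_num
  | t + 1 => by
      set d1 := marginal ρ0 (fun _ => π1) (fun _ => p) with hd1
      set d2 := marginal ρ0 (fun _ => π2) (fun _ => p) with hd2
      have ih := sum_abs_marginal_diff p π1 π2 ρ0 ε hε t
      -- pointwise bound
      have hpt : ∀ sa : S × A,
          |d1 (t+1) sa - d2 (t+1) sa| ≤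
          ∑ sa' : S × A,
            (|d1 t sa' - d2 t sa'| * ((p sa') sa.1).toReal * ((π1 sa.1) sa.2).toReal
             + d2 t sa' * ((p sa') sa.1).toReal *
                |((π1 sa.1) sa.2).toReal - ((π2 sa.1) sa.2).toReal|) := by
        intro sa
        have e1 : d1 (t+1) sa = ∑ sa' : S × A,
            d1 t sa' * ((p sa') sa.1).toReal * ((π1 sa.1) sa.2).toReal := by
          rw [hd1]; simp only [marginal]; rw [Fintype.sum_prod_type]
        have e2 : d2 (t+1) sa = ∑ sa' : S × A,
            d2 t sa' * ((p sa') sa.1).toReal * ((π2 sa.1) sa.2).toReal := by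
          rw [hd2]; simp only [marginal]; rw [Fintype.sum_prod_type]
        rw [e1, e2, ← Finset.sum_sub_distrib]
        refine (Finset.abs_sum_le_sum_abs _ _).trans (Finset.sum_le_sum fun sa' _ => ?_)
        have expand : d1 t sa' * ((p sa') sa.1).toReal * ((π1 sa.1) sa.2).toReal -
              d2 t sa' * ((p sa') sa.1).toReal * ((π2 sa.1) sa.2).toReal
            = (d1 t sa' - d2 t sa') * ((p sa') sa.1).toReal * ((π1 sa.1) sa.2).toReal
              + d2 t sa' * ((p sa') sa.1).toReal *
                (((π1 sa.1) sa.2).toReal - ((π2 sa.1) sa.2).toReal) := by ring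
        rw [expand]
        refine (abs_add_le _ _).trans ?_
        have b1 : |(d1 t sa' - d2 t sa') * ((p sa') sa.1).toReal * ((π1 sa.1) sa.2).toReal|
            = |d1 t sa' - d2 t sa'| * ((p sa') sa.1).toReal * ((π1 sa.1) sa.2).toReal := by
          rw [abs_mul, abs_mul, abs_of_nonneg (ENNReal.toReal_nonneg),
            abs_of_nonneg (ENNReal.toReal_nonneg)]
        have b2 : |d2 t sa' * ((p sa') sa.1).toReal *
              (((π1 sa.1) sa.2).toReal - ((π2 sa.1) sa.2).toReal)|
            = d2 t sa' * ((p sa') sa.1).toReal *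
              |((π1 sa.1) sa.2).toReal - ((π2 sa.1) sa.2).toReal| := by
          rw [abs_mul, abs_mul, abs_of_nonneg (marginal_nonneg _ _ _ t sa'),
            abs_of_nonneg (ENNReal.toReal_nonneg)]
        rw [b1, b2]
      calc ∑ sa : S × A, |d1 (t+1) sa - d2 (t+1) sa|
          ≤ ∑ sa : S × A, ∑ sa' : S × A,
            (|d1 t sa' - d2 t sa'| * ((p sa') sa.1).toReal * ((π1 sa.1) sa.2).toReal
             + d2 t sa' * ((p sa') sa.1).toReal *
                |((π1 sa.1) sa.2).toReal - ((π2 sa.1) sa.2).toReal|) :=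
            Finset.sum_le_sum fun sa _ => hpt sa
        _ = ∑ sa' : S × A, ∑ sa : S × A,
            (|d1 t sa' - d2 t sa'| * ((p sa') sa.1).toReal * ((π1 sa.1) sa.2).toReal
             + d2 t sa' * ((p sa') sa.1).toReal *
                |((π1 sa.1) sa.2).toReal - ((π2 sa.1) sa.2).toReal|) := Finset.sum_comm
        _ = ∑ sa' : S × A,
            (|d1 t sa' - d2 t sa'| *
              (∑ sa : S × A, ((p sa') sa.1).toReal * ((π1 sa.1) sa.2).toReal)
             + d2 t sa' *
              (∑ sa : S × A, ((p sa') sa.1).toReal *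
                |((π1 sa.1) sa.2).toReal - ((π2 sa.1) sa.2).toReal|)) := by
            refine Finset.sum_congr rfl fun sa' _ => ?_
            rw [Finset.sum_add_distrib, Finset.mul_sum, Finset.mul_sum]
            congr 1 <;> exact Finset.sum_congr rfl fun sa _ => by ring
        _ ≤ ∑ sa' : S × A, (|d1 t sa' - d2 t sa'| * 1 + d2 t sa' * (2 * ε)) := by
            refine Finset.sum_le_sum fun sa' _ => ?_
            have h1 : (∑ sa : S × A, ((p sa') sa.1).toReal * ((π1 sa.1) sa.2).toReal) = 1 :=
              sum_p_pi (p sa') π1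
            have h2 : (∑ sa : S × A, ((p sa') sa.1).toReal *
                |((π1 sa.1) sa.2).toReal - ((π2 sa.1) sa.2).toReal|) ≤ 2 * ε :=
              sum_p_pidiff (p sa') π1 π2 ε hε
            have := marginal_nonneg ρ0 (fun _ => π2) (fun _ => p) t sa'
            rw [h1]
            exact add_le_add le_rfl (mul_le_mul_of_nonneg_left h2 this)
        _ = (∑ sa' : S × A, |d1 t sa' - d2 t sa'|) +
            (∑ sa' : S × A, d2 t sa') * (2 * ε) := by
            rw [Finset.sum_add_distrib, Finset.sum_mul]
            simp [mul_one]
        _ ≤ 2 * ε * (t + 1) + 1 * (2 * ε) := by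
            rw [marginal_sum_one]
            exact add_le_add ih le_rfl
        _ = 2 * ε * ((t + 1 : ℕ) + 1) := by push_cast; ring

/-- Returns bound for two policies under the same dynamics. -/
theorem returns_bound_same_dynamics
    {S A : Type*} [Fintype S] [Fintype A] [Nonempty S] [Nonempty A]
    (p : S × A → PMF S) (π1 π2 : S → PMF A) (ρ0 : PMF S)
    (r : S × A → ℝ) (rmax : ℝ) (hrmax : 0 ≤ rmax) (hr : ∀ sa : S × A, |r sa| ≤ rmax)
    (γ : ℝ) (hγ0 : 0 < γ) (hγ1 : γ < 1) (επ : ℝ)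
    (hεπ : ∀ s : S, tv (π1 s) (π2 s) ≤ επ) :
    |ret γ r (marginal ρ0 (fun _ => π1) (fun _ => p)) -
        ret γ r (marginal ρ0 (fun _ => π2) (fun _ => p))| ≤
      2 * rmax * γ * επ / (1 - γ) ^ 2 + 2 * rmax * επ / (1 - γ) := by
  have hγne : (1 : ℝ) - γ ≠ 0 := by linarith
  set d1 := marginal ρ0 (fun _ => π1) (fun _ => p) with hd1
  set d2 := marginal ρ0 (fun _ => π2) (fun _ => p) with hd2
  set f1 : ℕ → ℝ := fun t => γ ^ t * ∑ sa : S × A, d1 t sa * r sa with hf1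
  set f2 : ℕ → ℝ := fun t => γ ^ t * ∑ sa : S × A, d2 t sa * r sa with hf2
  -- generic per-term bound for a marginal
  have hterm : ∀ (d : ℕ → S × A → ℝ), (∀ t sa, 0 ≤ d t sa) →
      (∀ t, ∑ sa : S × A, d t sa = 1) →
      ∀ t, |γ ^ t * ∑ sa : S × A, d t sa * r sa| ≤ rmax * γ ^ t := by
    intro d hnn hsum t
    rw [abs_mul, abs_pow, abs_of_pos hγ0]
    rw [mul_comm (rmax) (γ ^ t)]
    refine mul_le_mul_of_nonneg_left ?_ (pow_nonneg hγ0.le t)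
    calc |∑ sa : S × A, d t sa * r sa| ≤ ∑ sa : S × A, |d t sa * r sa| :=
          Finset.abs_sum_le_sum_abs _ _
      _ ≤ ∑ sa : S × A, d t sa * rmax := by
          refine Finset.sum_le_sum fun sa _ => ?_
          rw [abs_mul, abs_of_nonneg (hnn t sa)]
          exact mul_le_mul_of_nonneg_left (hr sa) (hnn t sa)
      _ = rmax := by rw [← Finset.sum_mul, hsum, one_mul]
  have hgsum : Summable (fun t : ℕ => rmax * γ ^ t) :=
    (summable_geometric_of_lt_one hγ0.le hγ1).mul_left rmax
  have hs1 : Summable f1 := by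
    refine Summable.of_norm_bounded hgsum fun t => ?_
    exact hterm d1 (marginal_nonneg _ _ _) (marginal_sum_one _ _ _) t
  have hs2 : Summable f2 := by
    refine Summable.of_norm_bounded hgsum fun t => ?_
    exact hterm d2 (marginal_nonneg _ _ _) (marginal_sum_one _ _ _) t
  have hsub : ret γ r d1 - ret γ r d2 = ∑' t, (f1 t - f2 t) := (Summable.tsum_sub hs1 hs2).symm
  -- per-term difference bound
  set B : ℕ → ℝ := fun t => 2 * rmax * επ * ((t : ℝ) * γ ^ t + γ ^ t) with hB
  have hdiff : ∀ t, |f1 t - f2 t| ≤ B t := by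
    intro t
    have e : f1 t - f2 t = γ ^ t * ∑ sa : S × A, (d1 t sa - d2 t sa) * r sa := by
      rw [hf1, hf2]
      simp only
      rw [← mul_sub, ← Finset.sum_sub_distrib]
      congr 1
      exact Finset.sum_congr rfl fun sa _ => by ring
    rw [e, abs_mul, abs_pow, abs_of_pos hγ0]
    have habs : |∑ sa : S × A, (d1 t sa - d2 t sa) * r sa| ≤ 2 * επ * (t + 1) * rmax := by
      calc |∑ sa : S × A, (d1 t sa - d2 t sa) * r sa|
          ≤ ∑ sa : S × A, |(d1 t sa - d2 t sa) * r sa| := Finset.abs_sum_le_sum_abs _ _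
        _ ≤ ∑ sa : S × A, |d1 t sa - d2 t sa| * rmax := by
            refine Finset.sum_le_sum fun sa _ => ?_
            rw [abs_mul]
            exact mul_le_mul_of_nonneg_left (hr sa) (abs_nonneg _)
        _ = (∑ sa : S × A, |d1 t sa - d2 t sa|) * rmax := by rw [Finset.sum_mul]
        _ ≤ 2 * επ * (t + 1) * rmax :=
            mul_le_mul_of_nonneg_right (sum_abs_marginal_diff p π1 π2 ρ0 επ hεπ t) hrmax
    calc γ ^ t * |∑ sa : S × A, (d1 t sa - d2 t sa) * r sa|
        ≤ γ ^ t * (2 * επ * (t + 1) * rmax) :=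
          mul_le_mul_of_nonneg_left habs (pow_nonneg hγ0.le t)
      _ = B t := by rw [hB]; ring
  -- summability of bound
  have hnormγ : ‖γ‖ < 1 := by rw [Real.norm_eq_abs, abs_of_pos hγ0]; exact hγ1
  have hsmul : Summable (fun t : ℕ => (t : ℝ) * γ ^ t) := by
    have := summable_pow_mul_geometric_of_norm_lt_one (R := ℝ) 1 hnormγ
    simpa using this
  have hsgeo : Summable (fun t : ℕ => γ ^ t) := summable_geometric_of_lt_one hγ0.le hγ1
  have hsB : Summable B := ((hsmul.add hsgeo).mul_left _)
  have hsabs : Summable (fun t => |f1 t - f2 t|) :=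
    Summable.of_nonneg_of_le (fun t => abs_nonneg _) hdiff hsB
  have htsumB : ∑' t, B t = 2 * rmax * γ * επ / (1 - γ) ^ 2 + 2 * rmax * επ / (1 - γ) := by
    rw [hB]
    rw [tsum_mul_left, Summable.tsum_add hsmul hsgeo,
      tsum_coe_mul_geometric_of_norm_lt_one hnormγ, tsum_geometric_of_lt_one hγ0.le hγ1]
    field_simp
  rw [hsub]
  calc |∑' t, (f1 t - f2 t)| ≤ ∑' t, |f1 t - f2 t| := by
        have := norm_tsum_le_tsum_norm (f := fun t => f1 t - f2 t) (by simpa using hsabs)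
        simpa using this
    _ ≤ ∑' t, B t := Summable.tsum_le_tsum hdiff hsabs hsB
    _ = _ := htsumB
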